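/- Let u : ℝ^d → ℝ be of class C⁵ (ContDiff ℝ 5), let H be ℓ¹-Lipschitz in its first argument, i.e. there is L ≥ 0 with |H(p,u,x) − H(q,u,x)| ≤ L Σ_{i=1}^d |p_i − q_i| for all p, q ∈ ℝ^d, u ∈ ℝ, x ∈ ℝ^d, and fix β ≥ 0, γ ≥ 0, θ ∈ ℝ, p ∈ [0,1]. Then for every compact set K ⊆ ℝ^d there exists a constant C ≥ 0 such that for every mesh vector h with 0 < h_i ≤ 1 for all i and every x ∈ K, |Ĥ_h[u](x) − (H(∇u(x), u(x), x) + θ u(x))| ≤ C h_max². (Second-order local truncation error of the high-order scheme at interior grid points.) -/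

import Mathlib

open Finset

private lemma iterWithin_eq {n m : ℕ} {f : ℝ → ℝ} (hf : ContDiff ℝ (n : ℕ∞) f)
    {s : Set ℝ} (hs : UniqueDiffOn ℝ s) {x : ℝ} (hx : x ∈ s) (hm : m ≤ n) :
    iteratedDerivWithin m f s x = iteratedDeriv m f x := by
  rw [iteratedDerivWithin_eq_iteratedFDerivWithin, iteratedDeriv_eq_iteratedFDeriv]
  congr 1
  exact (((contDiff_iff_ftaylorSeries.mp hf).hasFTaylorSeriesUpToOn s).eq_iteratedFDerivWithin_of_uniqueDiffOn
    (mod_cast hm) hs hx).symm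

private lemma taylor_right {n : ℕ} {v : ℝ → ℝ} (hv : ContDiff ℝ ((n+1 : ℕ) : ℕ∞) v)
    {s B : ℝ} (hs : 0 < s)
    (hB : ∀ t ∈ Set.Icc (0:ℝ) s, |iteratedDeriv (n + 1) v t| ≤ B) :
    |v s - ∑ k ∈ Finset.range (n + 1), ((k.factorial : ℝ))⁻¹ * s ^ k * iteratedDeriv k v 0|
        ≤ B * s ^ (n + 1) / n.factorial := by
  have hud : UniqueDiffOn ℝ (Set.Icc (0:ℝ) s) := uniqueDiffOn_Icc hs
  have h0 : (0:ℝ) ∈ Set.Icc (0:ℝ) s := Set.left_mem_Icc.mpr hs.le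
  have hmem : s ∈ Set.Icc (0:ℝ) s := Set.right_mem_Icc.mpr hs.le
  have hv' : ContDiffOn ℝ ((n : ℕ∞) + 1) v (Set.Icc (0:ℝ) s) := by
    exact_mod_cast hv.contDiffOn
  have H := taylor_mean_remainder_bound hs.le hv' hmem (fun y hy => by
    rw [Real.norm_eq_abs, iterWithin_eq hv hud hy le_rfl]; exact hB y hy)
  rw [taylor_within_apply] at H
  rw [Real.norm_eq_abs] at H
  calc |v s - ∑ k ∈ Finset.range (n + 1), ((k.factorial : ℝ))⁻¹ * s ^ k * iteratedDeriv k v 0|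
      = |v s - ∑ k ∈ Finset.range (n + 1),
          (((k.factorial : ℝ))⁻¹ * (s - 0) ^ k) • iteratedDerivWithin k v (Set.Icc (0:ℝ) s) 0| := by
        congr 2
        refine Finset.sum_congr rfl (fun k hk => ?_)
        rw [iterWithin_eq hv hud h0 (le_of_lt (Finset.mem_range.mp hk)), sub_zero,
          smul_eq_mul]
    _ ≤ B * s ^ (n + 1) / n.factorial := by simpa using H

private lemma taylor_left {n : ℕ} {v : ℝ → ℝ} (hv : ContDiff ℝ ((n+1 : ℕ) : ℕ∞) v)
    {s B : ℝ} (hs : 0 < s)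
    (hB : ∀ t ∈ Set.Icc (-s) (0:ℝ), |iteratedDeriv (n + 1) v t| ≤ B) :
    |v (-s) - ∑ k ∈ Finset.range (n + 1), ((k.factorial : ℝ))⁻¹ * (-s) ^ k * iteratedDeriv k v 0|
        ≤ B * s ^ (n + 1) / n.factorial := by
  have hw : ContDiff ℝ ((n+1 : ℕ) : ℕ∞) (fun t => v (-t)) := hv.comp contDiff_neg
  have H := taylor_right hw hs (fun t ht => by
    rw [iteratedDeriv_comp_neg, smul_eq_mul, abs_mul, abs_pow, abs_neg, abs_one, one_pow, one_mul]
    exact hB (-t) ⟨neg_le_neg ht.2, neg_nonpos.mpr ht.1⟩)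
  have hsum : ∀ k ∈ Finset.range (n+1), ((k.factorial : ℝ))⁻¹ * s ^ k * iteratedDeriv k (fun t => v (-t)) 0
      = ((k.factorial : ℝ))⁻¹ * (-s) ^ k * iteratedDeriv k v 0 := by
    intro k _
    rw [iteratedDeriv_comp_neg, neg_zero, smul_eq_mul, neg_pow]
    ring
  rw [Finset.sum_congr rfl hsum] at H
  exact H

private lemma sym2 {v : ℝ → ℝ} (hv : ContDiff ℝ ((2:ℕ) : ℕ∞) v) {s B : ℝ} (hs : 0 < s)
    (hB : ∀ t ∈ Set.Icc (-s) s, |iteratedDeriv 2 v t| ≤ B) :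
    |v s + v (-s) - 2 * v 0| ≤ 2 * B * s ^ 2 := by
  have h1 := taylor_right (n := 1) hv hs
    (fun t ht => hB t ⟨le_trans (neg_nonpos.mpr hs.le) ht.1, ht.2⟩)
  have h2 := taylor_left (n := 1) hv hs
    (fun t ht => hB t ⟨ht.1, le_trans ht.2 hs.le⟩)
  simp only [Finset.sum_range_succ, Finset.sum_range_zero, iteratedDeriv_zero, iteratedDeriv_one,
    Nat.factorial, pow_zero, pow_one, Nat.cast_one, inv_one, one_mul, mul_one, zero_add] at h1 h2
  rw [abs_le] at h1 h2
  rw [abs_le]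
  constructor <;> nlinarith [h1.1, h1.2, h2.1, h2.2]

private lemma sym3 {v : ℝ → ℝ} (hv : ContDiff ℝ ((3:ℕ) : ℕ∞) v) {s B : ℝ} (hs : 0 < s)
    (hB : ∀ t ∈ Set.Icc (-s) s, |iteratedDeriv 3 v t| ≤ B) :
    |v s - v (-s) - 2 * s * deriv v 0| ≤ B * s ^ 3 := by
  have h1 := taylor_right (n := 2) hv hs
    (fun t ht => hB t ⟨le_trans (neg_nonpos.mpr hs.le) ht.1, ht.2⟩)
  have h2 := taylor_left (n := 2) hv hs
    (fun t ht => hB t ⟨ht.1, le_trans ht.2 hs.le⟩)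
  simp only [Finset.sum_range_succ, Finset.sum_range_zero, iteratedDeriv_zero, iteratedDeriv_one,
    Nat.factorial, pow_zero, pow_one, Nat.cast_one, Nat.cast_ofNat, inv_one, one_mul, mul_one,
    zero_add] at h1 h2
  rw [abs_le] at h1 h2
  rw [abs_le]
  have e1 : (-s) ^ 2 = s ^ 2 := by ring
  rw [e1] at h2
  constructor <;> nlinarith [h1.1, h1.2, h2.1, h2.2]

private lemma sym4 {v : ℝ → ℝ} (hv : ContDiff ℝ ((4:ℕ) : ℕ∞) v) {s B : ℝ} (hs : 0 < s)
    (hB : ∀ t ∈ Set.Icc (-s) s, |iteratedDeriv 4 v t| ≤ B) :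
    |v s + v (-s) - 2 * v 0 - s ^ 2 * iteratedDeriv 2 v 0| ≤ B * s ^ 4 / 3 := by
  have h1 := taylor_right (n := 3) hv hs
    (fun t ht => hB t ⟨le_trans (neg_nonpos.mpr hs.le) ht.1, ht.2⟩)
  have h2 := taylor_left (n := 3) hv hs
    (fun t ht => hB t ⟨ht.1, le_trans ht.2 hs.le⟩)
  simp only [Finset.sum_range_succ, Finset.sum_range_zero, iteratedDeriv_zero, iteratedDeriv_one,
    Nat.factorial, pow_zero, pow_one, Nat.cast_one, Nat.cast_ofNat, inv_one, one_mul, mul_one,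
    zero_add] at h1 h2
  rw [abs_le] at h1 h2
  rw [abs_le]
  have e1 : (-s) ^ 2 = s ^ 2 := by ring
  have e2 : (-s) ^ 3 = -(s ^ 3) := by ring
  rw [e1, e2] at h2
  have hf3 : ((3:ℕ).factorial : ℝ) = 6 := by norm_num [Nat.factorial]
  constructor <;> nlinarith [h1.1, h1.2, h2.1, h2.2]

private noncomputable def dirIter {d : ℕ} (w : Fin d → ℝ) : ℕ → ((Fin d → ℝ) → ℝ) → ((Fin d → ℝ) → ℝ)
  | 0, v => v
  | (k+1), v => dirIter w k (fun y => fderiv ℝ v y w)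

private lemma dirIter_contDiff {d : ℕ} (w : Fin d → ℝ) :
    ∀ (k m : ℕ) (v : (Fin d → ℝ) → ℝ), ContDiff ℝ ((k + m : ℕ) : ℕ∞) v →
      ContDiff ℝ ((m : ℕ) : ℕ∞) (dirIter w k v)
  | 0, m, v, hv => by simpa [dirIter] using hv
  | (k+1), m, v, hv => by
    have hdv : ContDiff ℝ ((k + m : ℕ) : ℕ∞) (fun y => fderiv ℝ v y w) := by
      have h1 : ContDiff ℝ ((k + m : ℕ) : ℕ∞) (fderiv ℝ v) := by
        apply hv.fderiv_right
        norm_cast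
        omega
      exact h1.clm_apply contDiff_const
    exact dirIter_contDiff w k m _ hdv

private lemma line_hasDerivAt {d : ℕ} (v : (Fin d → ℝ) → ℝ) (hv : Differentiable ℝ v)
    (y w : Fin d → ℝ) (t : ℝ) :
    HasDerivAt (fun t : ℝ => v (y + t • w)) (fderiv ℝ v (y + t • w) w) t := by
  have h1 : HasDerivAt (fun t : ℝ => y + t • w) w t := by
    simpa using ((hasDerivAt_id t).smul_const w).const_add y
  exact ((hv (y + t • w)).hasFDerivAt).comp_hasDerivAt t h1

private lemma dirIter_line {d : ℕ} (w : Fin d → ℝ) :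
    ∀ (k m : ℕ) (v : (Fin d → ℝ) → ℝ), ContDiff ℝ ((k + m : ℕ) : ℕ∞) v → ∀ (y : Fin d → ℝ),
      iteratedDeriv k (fun t : ℝ => v (y + t • w)) = fun t => dirIter w k v (y + t • w)
  | 0, m, v, hv, y => by simp [dirIter, iteratedDeriv_zero]
  | (k+1), m, v, hv, y => by
    have hvd : Differentiable ℝ v := hv.differentiable (by norm_cast; omega)
    have hder : deriv (fun t : ℝ => v (y + t • w))
        = fun t => (fun z => fderiv ℝ v z w) (y + t • w) := by
      funext t
      exact (line_hasDerivAt v hvd y w t).deriv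
    have hdv : ContDiff ℝ ((k + m : ℕ) : ℕ∞) (fun z => fderiv ℝ v z w) := by
      have h1 : ContDiff ℝ ((k + m : ℕ) : ℕ∞) (fderiv ℝ v) := by
        apply hv.fderiv_right
        norm_cast
        omega
      exact h1.clm_apply contDiff_const
    rw [iteratedDeriv_succ', hder]
    exact dirIter_line w k m _ hdv y

private lemma stag_arith {A1 A2 c s M hm : ℝ} (hs : 0 < s) (hshm : s ≤ hm) (hM : 0 ≤ M)
    (h1 : |A1 - s^2*c| ≤ M*s^4/3) (h2 : |A2 - (2*s)^2*c| ≤ M*(2*s)^4/3) :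
    |A2/(4*s^2) - A1/s^2| ≤ 2*M*hm^2 := by
  have hs2 : (0:ℝ) < s^2 := pow_pos hs 2
  have h4s2 : (0:ℝ) < 4*s^2 := by linarith
  have key : A2/(4*s^2) - A1/s^2 = (A2 - (2*s)^2*c)/(4*s^2) - (A1 - s^2*c)/s^2 := by
    field_simp
    ring
  rw [key]
  have t1 : |(A2 - (2*s)^2*c)/(4*s^2)| ≤ 4*M*s^2/3 := by
    rw [abs_div, abs_of_pos h4s2, div_le_iff₀ h4s2]
    calc |A2 - (2*s)^2*c| ≤ M*(2*s)^4/3 := h2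
      _ = 4*M*s^2/3*(4*s^2) := by ring
  have t2 : |(A1 - s^2*c)/s^2| ≤ M*s^2/3 := by
    rw [abs_div, abs_of_pos hs2, div_le_iff₀ hs2]
    calc |A1 - s^2*c| ≤ M*s^4/3 := h1
      _ = M*s^2/3*s^2 := by ring
  have hsq : s^2 ≤ hm^2 := pow_le_pow_left₀ hs.le hshm 2
  calc |(A2 - (2*s)^2*c)/(4*s^2) - (A1 - s^2*c)/s^2|
      ≤ |(A2 - (2*s)^2*c)/(4*s^2)| + |(A1 - s^2*c)/s^2| := abs_sub _ _
    _ ≤ 4*M*s^2/3 + M*s^2/3 := add_le_add t1 t2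
    _ ≤ 2*M*hm^2 := by nlinarith [mul_nonneg hM (sub_nonneg.mpr hsq)]


/-- Second-order local truncation error of the high-order scheme `Ĥ_h` at interior
points: for `u ∈ C⁵`, `H` ℓ¹-Lipschitz in its gradient argument, `β, γ ≥ 0`,
`p ∈ [0,1]`, and any compact `K`, there is `C ≥ 0` with
`|Ĥ_h[u](x) − (H(∇u(x), u(x), x) + θ u(x))| ≤ C h_max²` for all meshes with
`0 < h_i ≤ 1` and all `x ∈ K`. -/
theorem high_order_scheme_truncation {d : ℕ} (hd : 0 < d)
    (u : (Fin d → ℝ) → ℝ) (hu : ContDiff ℝ 5 u)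
    (H : (Fin d → ℝ) → ℝ → (Fin d → ℝ) → ℝ)
    (L : ℝ) (hL : 0 ≤ L)
    (hLip : ∀ (p q : Fin d → ℝ) (v : ℝ) (x : Fin d → ℝ),
      |H p v x - H q v x| ≤ L * ∑ i, |p i - q i|)
    (β γ θ p : ℝ) (hβ : 0 ≤ β) (hγ : 0 ≤ γ) (hp : p ∈ Set.Icc (0 : ℝ) 1)
    (K : Set (Fin d → ℝ)) (hK : IsCompact K) :
    ∃ C : ℝ, 0 ≤ C ∧ ∀ h : Fin d → ℝ, (∀ i, 0 < h i ∧ h i ≤ 1) → ∀ x ∈ K,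
      let hmax : ℝ := Finset.univ.sup' ⟨⟨0, hd⟩, Finset.mem_univ _⟩ h
      let e : Fin d → (Fin d → ℝ) := fun i => Pi.single i 1
      let Δh : ℝ := ∑ i,
        (u (x + h i • e i) - 2 * u x + u (x - h i • e i)) / (h i) ^ 2
      let Δ2h : ℝ := ∑ i,
        (u (x + (2 * h i) • e i) - 2 * u x + u (x - (2 * h i) • e i)) / (4 * (h i) ^ 2)
      let gradh : Fin d → ℝ := fun i =>
        (u (x + h i • e i) - u (x - h i • e i)) / (2 * h i)
      |(-β * hmax ^ 2 * Δh + H gradh (u x) x + θ * u x + γ * hmax ^ p * (Δ2h - Δh))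
          - (H (fun i => fderiv ℝ u x (e i)) (u x) x + θ * u x)| ≤ C * hmax ^ 2 := by
  classical
  have hu5 : ContDiff ℝ ((5 : ℕ) : ℕ∞) u := by exact_mod_cast hu
  set E : Fin d → (Fin d → ℝ) := fun i => Pi.single i 1 with hE
  have hnormE : ∀ i, ‖E i‖ = 1 := by
    intro i
    rw [hE]
    simp [Pi.norm_single]
  set K' : Set (Fin d → ℝ) := Metric.cthickening 2 K with hK'def
  have hK'c : IsCompact K' := hK.cthickening
  have hmemK' : ∀ x ∈ K, ∀ (i : Fin d) (t : ℝ), |t| ≤ 2 → x + t • E i ∈ K' := by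
    intro x hx i t ht
    refine Metric.mem_cthickening_of_dist_le _ x 2 K hx ?_
    rw [dist_eq_norm, add_sub_cancel_left, norm_smul, hnormE, mul_one, Real.norm_eq_abs]
    exact ht
  have hcd : ∀ (k m : ℕ), k + m = 5 → ∀ i : Fin d,
      ContDiff ℝ ((m : ℕ) : ℕ∞) (dirIter (E i) k u) := by
    intro k m hkm i
    exact dirIter_contDiff (E i) k m u (by rw [hkm]; exact hu5)
  have hbdd : ∀ i : Fin d, ∃ C : ℝ, 0 ≤ C ∧ ∀ y ∈ K',
      |dirIter (E i) 2 u y| ≤ C ∧ |dirIter (E i) 3 u y| ≤ C ∧ |dirIter (E i) 4 u y| ≤ C := by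
    intro i
    have hg : ContinuousOn (fun y => |dirIter (E i) 2 u y| + |dirIter (E i) 3 u y|
        + |dirIter (E i) 4 u y|) K' :=
      (((hcd 2 3 rfl i).continuous.abs.add
        (hcd 3 2 rfl i).continuous.abs).add (hcd 4 1 rfl i).continuous.abs).continuousOn
    obtain ⟨C, hC⟩ := hK'c.exists_bound_of_continuousOn hg
    refine ⟨max C 0, le_max_right _ _, fun y hy => ?_⟩
    have h1 := hC y hy
    rw [Real.norm_eq_abs] at h1
    have h2 : |dirIter (E i) 2 u y| + |dirIter (E i) 3 u y| + |dirIter (E i) 4 u y| ≤ max C 0 :=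
      le_trans (le_trans (le_abs_self _) h1) (le_max_left _ _)
    have a2 := abs_nonneg (dirIter (E i) 2 u y)
    have a3 := abs_nonneg (dirIter (E i) 3 u y)
    have a4 := abs_nonneg (dirIter (E i) 4 u y)
    exact ⟨by linarith, by linarith, by linarith⟩
  choose Cf hCf0 hCf using hbdd
  have hne : (Finset.univ : Finset (Fin d)).Nonempty := ⟨⟨0, hd⟩, Finset.mem_univ _⟩
  set M : ℝ := max 0 (Finset.univ.sup' hne Cf) with hM
  have hM0 : 0 ≤ M := le_max_left _ _
  have hMi : ∀ i, Cf i ≤ M := fun i =>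
    le_trans (Finset.le_sup' Cf (Finset.mem_univ i)) (le_max_right _ _)
  refine ⟨β * (2 * d * M) + γ * (2 * d * M) + L * (d * M / 2), by positivity, ?_⟩
  intro h hh x hx
  intro hmax e Δh Δ2h gradh
  have hle : ∀ i, h i ≤ hmax := fun i => Finset.le_sup' h (Finset.mem_univ i)
  have hmax1 : hmax ≤ 1 := Finset.sup'_le _ h (fun i _ => (hh i).2)
  have hmaxpos : 0 < hmax := lt_of_lt_of_le (hh ⟨0, hd⟩).1 (hle ⟨0, hd⟩)
  -- smoothness of the 1D slices
  have hvsmooth : ∀ i : Fin d, ContDiff ℝ ((5 : ℕ) : ℕ∞) (fun t : ℝ => u (x + t • E i)) :=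
    fun i => hu5.comp (contDiff_const.add (contDiff_id.smul contDiff_const))
  have hIDk : ∀ (i : Fin d) (k m : ℕ), k + m = 5 →
      iteratedDeriv k (fun t : ℝ => u (x + t • E i))
        = fun t => dirIter (E i) k u (x + t • E i) := by
    intro i k m hkm
    exact dirIter_line (E i) k m u (by rw [hkm]; exact hu5) x
  have hmemt : ∀ (i : Fin d) (r : ℝ), 0 < r → r ≤ 2 → ∀ t ∈ Set.Icc (-r) r,
      x + t • E i ∈ K' := fun i r hr0 hr2 t ht =>
    hmemK' x hx i t (abs_le.mpr ⟨le_trans (by linarith) ht.1, le_trans ht.2 hr2⟩)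
  have hB2 : ∀ (i : Fin d) (r : ℝ), 0 < r → r ≤ 2 →
      ∀ t ∈ Set.Icc (-r) r, |iteratedDeriv 2 (fun t : ℝ => u (x + t • E i)) t| ≤ M := by
    intro i r hr0 hr2 t ht
    rw [hIDk i 2 3 rfl]
    exact le_trans (hCf i _ (hmemt i r hr0 hr2 t ht)).1 (hMi i)
  have hB3 : ∀ (i : Fin d) (r : ℝ), 0 < r → r ≤ 2 →
      ∀ t ∈ Set.Icc (-r) r, |iteratedDeriv 3 (fun t : ℝ => u (x + t • E i)) t| ≤ M := by
    intro i r hr0 hr2 t ht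
    rw [hIDk i 3 2 rfl]
    exact le_trans (hCf i _ (hmemt i r hr0 hr2 t ht)).2.1 (hMi i)
  have hB4 : ∀ (i : Fin d) (r : ℝ), 0 < r → r ≤ 2 →
      ∀ t ∈ Set.Icc (-r) r, |iteratedDeriv 4 (fun t : ℝ => u (x + t • E i)) t| ≤ M := by
    intro i r hr0 hr2 t ht
    rw [hIDk i 4 1 rfl]
    exact le_trans (hCf i _ (hmemt i r hr0 hr2 t ht)).2.2 (hMi i)
  -- Laplacian bound
  have hlap : ∀ i : Fin d,
      |(u (x + h i • E i) - 2 * u x + u (x - h i • E i)) / (h i) ^ 2| ≤ 2 * M := by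
    intro i
    have hs : 0 < h i := (hh i).1
    have hr2 : h i ≤ 2 := le_trans (hh i).2 one_le_two
    have h2 := sym2 ((hvsmooth i).of_le (by exact_mod_cast (by norm_num : (2:ℕ) ≤ 5))) hs
      (hB2 i (h i) hs hr2)
    simp only [neg_smul, zero_smul, add_zero, ← sub_eq_add_neg] at h2
    have hp2 : (0:ℝ) < (h i)^2 := pow_pos hs 2
    rw [abs_div, abs_of_pos hp2, div_le_iff₀ hp2]
    calc |u (x + h i • E i) - 2 * u x + u (x - h i • E i)|
        = |u (x + h i • E i) + u (x - h i • E i) - 2 * u x| := by ring_nf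
      _ ≤ 2 * M * (h i)^2 := h2
  -- gradient bound
  have hgradb : ∀ i : Fin d,
      |(u (x + h i • E i) - u (x - h i • E i)) / (2 * h i) - fderiv ℝ u x (E i)|
        ≤ M / 2 * hmax ^ 2 := by
    intro i
    have hs : 0 < h i := (hh i).1
    have hr2 : h i ≤ 2 := le_trans (hh i).2 one_le_two
    have h3 := sym3 ((hvsmooth i).of_le (by exact_mod_cast (by norm_num : (3:ℕ) ≤ 5))) hs
      (hB3 i (h i) hs hr2)
    have hder0 : deriv (fun t : ℝ => u (x + t • E i)) 0 = fderiv ℝ u x (E i) := by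
      have h4 := (line_hasDerivAt u
        (hu5.differentiable (by simp)) x (E i) 0).deriv
      rw [h4]
      norm_num
    rw [hder0] at h3
    simp only [neg_smul, zero_smul, add_zero, ← sub_eq_add_neg] at h3
    have h2s : (0:ℝ) < 2 * h i := by linarith
    rw [show (u (x + h i • E i) - u (x - h i • E i)) / (2 * h i) - fderiv ℝ u x (E i)
        = (u (x + h i • E i) - u (x - h i • E i) - 2 * h i * fderiv ℝ u x (E i)) / (2 * h i)
        from by field_simp]
    rw [abs_div, abs_of_pos h2s, div_le_iff₀ h2s]
    have hsq : (h i)^2 ≤ hmax^2 := pow_le_pow_left₀ hs.le (hle i) 2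
    calc |u (x + h i • E i) - u (x - h i • E i) - 2 * h i * fderiv ℝ u x (E i)|
        ≤ M * (h i)^3 := h3
      _ ≤ M / 2 * hmax ^ 2 * (2 * h i) := by
          nlinarith [mul_nonneg (mul_nonneg hM0 hs.le) (sub_nonneg.mpr hsq)]
  -- staggered second difference bound
  have hstag : ∀ i : Fin d,
      |(u (x + (2 * h i) • E i) - 2 * u x + u (x - (2 * h i) • E i)) / (4 * (h i) ^ 2)
        - (u (x + h i • E i) - 2 * u x + u (x - h i • E i)) / (h i) ^ 2| ≤ 2 * M * hmax ^ 2 := by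
    intro i
    have hs : 0 < h i := (hh i).1
    have h2s : (0:ℝ) < 2 * h i := by linarith
    have hr4 : 2 * h i ≤ 2 := by linarith [(hh i).2]
    have hv4 : ContDiff ℝ ((4 : ℕ) : ℕ∞) (fun t : ℝ => u (x + t • E i)) :=
      (hvsmooth i).of_le (by exact_mod_cast (by norm_num : (4:ℕ) ≤ 5))
    have hb4 := hB4 i (2 * h i) h2s hr4
    have hA1 := sym4 hv4 hs (fun t ht => hb4 t ⟨by linarith [ht.1], by linarith [ht.2]⟩)
    have hA2 := sym4 hv4 h2s hb4
    simp only [neg_smul, zero_smul, add_zero, ← sub_eq_add_neg] at hA1 hA2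
    have e1 : u (x + (2 * h i) • E i) - 2 * u x + u (x - (2 * h i) • E i)
        = u (x + (2 * h i) • E i) + u (x - (2 * h i) • E i) - 2 * u x := by ring
    have e2 : u (x + h i • E i) - 2 * u x + u (x - h i • E i)
        = u (x + h i • E i) + u (x - h i • E i) - 2 * u x := by ring
    rw [e1, e2]
    exact stag_arith hs (hle i) hM0 hA1 hA2
  -- sum bounds
  have hb1 : |Δh| ≤ (d : ℝ) * (2 * M) := by
    have := Finset.abs_sum_le_sum_abs
      (fun i => (u (x + h i • E i) - 2 * u x + u (x - h i • E i)) / (h i) ^ 2)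
      (Finset.univ : Finset (Fin d))
    refine le_trans this (le_trans (Finset.sum_le_sum (fun i _ => hlap i)) ?_)
    rw [Finset.sum_const, Finset.card_univ, Fintype.card_fin, nsmul_eq_mul]
  have hb2 : |Δ2h - Δh| ≤ (d : ℝ) * (2 * M * hmax ^ 2) := by
    have hsplit : Δ2h - Δh = ∑ i : Fin d,
        ((u (x + (2 * h i) • E i) - 2 * u x + u (x - (2 * h i) • E i)) / (4 * (h i) ^ 2)
          - (u (x + h i • E i) - 2 * u x + u (x - h i • E i)) / (h i) ^ 2) := by
      rw [Finset.sum_sub_distrib]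
    rw [hsplit]
    refine le_trans (Finset.abs_sum_le_sum_abs _ _)
      (le_trans (Finset.sum_le_sum (fun i _ => hstag i)) ?_)
    rw [Finset.sum_const, Finset.card_univ, Fintype.card_fin, nsmul_eq_mul]
  have hb3 : |H gradh (u x) x - H (fun i => fderiv ℝ u x (e i)) (u x) x|
      ≤ L * ((d : ℝ) * (M / 2 * hmax ^ 2)) := by
    refine le_trans (hLip gradh (fun i => fderiv ℝ u x (e i)) (u x) x) ?_
    refine mul_le_mul_of_nonneg_left ?_ hL
    have hterm : ∀ i : Fin d, |gradh i - fderiv ℝ u x (e i)| ≤ M / 2 * hmax ^ 2 :=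
      fun i => hgradb i
    refine le_trans (Finset.sum_le_sum (fun i _ => hterm i)) ?_
    rw [Finset.sum_const, Finset.card_univ, Fintype.card_fin, nsmul_eq_mul]
  -- assemble
  have hrp0 : (0:ℝ) ≤ hmax ^ p := Real.rpow_nonneg hmaxpos.le p
  have hrp1 : hmax ^ p ≤ 1 := Real.rpow_le_one hmaxpos.le hmax1 hp.1
  rw [show -β * hmax ^ 2 * Δh + H gradh (u x) x + θ * u x + γ * hmax ^ p * (Δ2h - Δh)
      - (H (fun i => fderiv ℝ u x (e i)) (u x) x + θ * u x)
      = -(β * hmax ^ 2 * Δh) + γ * hmax ^ p * (Δ2h - Δh)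
        + (H gradh (u x) x - H (fun i => fderiv ℝ u x (e i)) (u x) x) from by ring]
  calc |(-(β * hmax ^ 2 * Δh) + γ * hmax ^ p * (Δ2h - Δh)
        + (H gradh (u x) x - H (fun i => fderiv ℝ u x (e i)) (u x) x))|
      ≤ |(-(β * hmax ^ 2 * Δh) + γ * hmax ^ p * (Δ2h - Δh))|
        + |H gradh (u x) x - H (fun i => fderiv ℝ u x (e i)) (u x) x| := abs_add_le _ _
    _ ≤ |(-(β * hmax ^ 2 * Δh))| + |γ * hmax ^ p * (Δ2h - Δh)|
        + |H gradh (u x) x - H (fun i => fderiv ℝ u x (e i)) (u x) x| :=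
          add_le_add_left (abs_add_le _ _) _
    _ ≤ β * hmax ^ 2 * ((d : ℝ) * (2 * M)) + γ * hmax ^ p * ((d : ℝ) * (2 * M * hmax ^ 2))
        + L * ((d : ℝ) * (M / 2 * hmax ^ 2)) := by
          refine add_le_add (add_le_add ?_ ?_) hb3
          · rw [abs_neg, abs_mul, abs_of_nonneg (by positivity : (0:ℝ) ≤ β * hmax ^ 2)]
            exact mul_le_mul_of_nonneg_left hb1 (by positivity)
          · rw [abs_mul, abs_of_nonneg (mul_nonneg hγ hrp0)]
            exact mul_le_mul_of_nonneg_left hb2 (mul_nonneg hγ hrp0)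
    _ ≤ β * hmax ^ 2 * ((d : ℝ) * (2 * M)) + γ * 1 * ((d : ℝ) * (2 * M * hmax ^ 2))
        + L * ((d : ℝ) * (M / 2 * hmax ^ 2)) := by
          have : γ * hmax ^ p * ((d : ℝ) * (2 * M * hmax ^ 2))
              ≤ γ * 1 * ((d : ℝ) * (2 * M * hmax ^ 2)) := by
            apply mul_le_mul_of_nonneg_right _ (by positivity)
            exact mul_le_mul_of_nonneg_left hrp1 hγ
          linarith
    _ = (β * (2 * d * M) + γ * (2 * d * M) + L * (d * M / 2)) * hmax ^ 2 := by ring
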